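/- Let d ≥ 2 and m ≥ 3 be integers, let θ, θ′ ∈ ℝ and ε ≥ 0, fix a unit vector u ∈ S^{d−1}, and let x₁, …, x_m be independent random vectors, each distributed according to σ_d. Set p := (σ_d ⊗ σ_d)({(x, y) : |⟨x, y⟩ − cos θ| ≤ ε}) and p′ := σ_d({z : |⟨z, u⟩ − cos θ′| ≤ ε}). Let Z be the number of triples (i, j, k) of pairwise distinct indices in {1, …, m} such that x_i ≠ x_j, |⟨x_i, x_j⟩ − cos θ| ≤ ε, and |⟨(x_i − x_j)/‖x_i − x_j‖, x_k⟩ − cos θ′| ≤ ε. Then E[Z] = m(m−1)(m−2)·p·p′. -/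

import Mathlib

open MeasureTheory ProbabilityTheory
open scoped RealInnerProductSpace Classical

/-- `σ` is the uniform (normalized rotation-invariant) probability measure on the unit sphere
`S^{d−1} ⊆ ℝ^d`, viewed as a measure on `ℝ^d` concentrated on the sphere. -/
def IsUniformSphereMeasure (d : ℕ) (σ : Measure (EuclideanSpace ℝ (Fin d))) : Prop :=
  IsProbabilityMeasure σ ∧ σ (Metric.sphere (0 : EuclideanSpace ℝ (Fin d)) 1) = 1 ∧
    ∀ O : EuclideanSpace ℝ (Fin d) ≃ₗᵢ[ℝ] EuclideanSpace ℝ (Fin d), Measure.map (⇑O) σ = σ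

section Aux


variable {d : ℕ}

local notation "E" => EuclideanSpace ℝ (Fin d)

lemma exists_isometry (a b : E) (h : ‖a‖ = ‖b‖) : ∃ O : E ≃ₗᵢ[ℝ] E, O a = b :=
  ⟨Submodule.reflection (ℝ ∙ (a - b))ᗮ, Submodule.reflection_sub h⟩

lemma singleton_eq_measure (σ : Measure E)
    (hinv : ∀ O : E ≃ₗᵢ[ℝ] E, Measure.map (⇑O) σ = σ)
    (a b : E) (h : ‖a‖ = ‖b‖) : σ {a} = σ {b} := by
  obtain ⟨O, hO⟩ := exists_isometry a b h
  have := hinv O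
  calc σ {a} = (Measure.map (⇑O) σ) {b} := by
        rw [Measure.map_apply (O.continuous.measurable) (measurableSet_singleton b)]
        congr 1
        ext z
        simp only [Set.mem_preimage, Set.mem_singleton_iff, ← hO]
        exact ⟨fun hz => by rw [hz], fun hz => O.injective hz⟩
    _ = σ {b} := by rw [this]

lemma sphere_atomless (hd : 2 ≤ d) (σ : Measure E) [IsProbabilityMeasure σ]
    (hinv : ∀ O : E ≃ₗᵢ[ℝ] E, Measure.map (⇑O) σ = σ)
    (v : E) (hv : ‖v‖ = 1) : σ {v} = 0 := by
  by_contra hc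
  set e0 : E := EuclideanSpace.single ⟨0, by omega⟩ 1 with he0
  set e1 : E := EuclideanSpace.single ⟨1, by omega⟩ 1 with he1
  set w : ℕ → E := fun n => Real.cos (1/(n+1)) • e0 + Real.sin (1/(n+1)) • e1 with hw
  have hmem : ∀ n : ℕ, (1:ℝ)/(n+1) ∈ Set.Icc (0:ℝ) Real.pi := by
    intro n
    constructor
    · positivity
    · have h1 : (1:ℝ)/(n+1) ≤ 1 := by
        rw [div_le_one (by positivity)]
        linarith [Nat.cast_nonneg (α := ℝ) n]
      linarith [Real.pi_gt_three]
  have hinj : Function.Injective w := by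
    intro n k hnk
    have h0 := congrFun (congrArg (WithLp.equiv 2 _) hnk) ⟨0, by omega⟩
    simp only [hw, he0, he1, WithLp.equiv_apply, PiLp.add_apply, PiLp.smul_apply,
      EuclideanSpace.single_apply, smul_eq_mul] at h0
    norm_num at h0
    have := Real.injOn_cos (by simpa [one_div] using hmem n) (by simpa [one_div] using hmem k) h0
    field_simp at this
    exact_mod_cast (by linarith : (n:ℝ) = k)
  have hnorm : ∀ n, ‖w n‖ = 1 := by
    intro n
    have horth : ⟪Real.cos (1/(n+1)) • e0, Real.sin (1/(n+1)) • e1⟫ = 0 := by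
      rw [real_inner_smul_left, real_inner_smul_right]
      have : ⟪e0, e1⟫ = 0 := by
        rw [he0, he1, EuclideanSpace.inner_single_left]
        simp [EuclideanSpace.single_apply]
      rw [this]; ring
    have hsq : ‖w n‖ ^ 2 = 1 := by
      rw [hw]
      rw [norm_add_sq_real, horth]
      rw [norm_smul, norm_smul, he0, he1, EuclideanSpace.norm_single]
      simp only [EuclideanSpace.norm_single, norm_one, mul_one, Real.norm_eq_abs, sq_abs,
        mul_zero]
      linarith [Real.cos_sq_add_sin_sq (1/((n:ℝ)+1))]
    nlinarith [norm_nonneg (w n)]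
  have hsame : ∀ n, σ {w n} = σ {v} :=
    fun n => singleton_eq_measure σ hinv (w n) v ((hnorm n).trans hv.symm)
  have hdisj : Pairwise (Function.onFun Disjoint fun n => ({w n} : Set E)) := by
    intro n k hnk
    simp only [Function.onFun, Set.disjoint_singleton]
    exact fun h => hnk (hinj h)
  have hm := measure_iUnion (μ := σ) hdisj (fun n => measurableSet_singleton (w n))
  simp only [hsame] at hm
  rw [ENNReal.tsum_const_eq_top_of_ne_zero hc] at hm
  have hle : σ (⋃ n, ({w n} : Set E)) ≤ 1 := prob_le_one
  rw [hm] at hle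
  simp at hle

lemma slice_measurable (v : E) (c ε : ℝ) :
    MeasurableSet {z : E | ‖z‖ = 1 ∧ |⟪v, z⟫ - c| ≤ ε} := by
  apply MeasurableSet.inter
  · exact (isClosed_eq continuous_norm continuous_const).measurableSet
  · have hcont : Continuous fun z : E => |⟪v, z⟫ - c| := by
      apply Continuous.abs
      exact (Continuous.inner continuous_const (continuous_id : Continuous (id : E → E))).sub continuous_const
    exact (isClosed_le hcont continuous_const).measurableSet

lemma slice_invariant (σ : Measure E)
    (hinv : ∀ O : E ≃ₗᵢ[ℝ] E, Measure.map (⇑O) σ = σ)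
    (u v : E) (hu : ‖u‖ = 1) (hv : ‖v‖ = 1) (c ε : ℝ) :
    σ {z | ‖z‖ = 1 ∧ |⟪v, z⟫ - c| ≤ ε} = σ {z | ‖z‖ = 1 ∧ |⟪z, u⟫ - c| ≤ ε} := by
  obtain ⟨O, hO⟩ := exists_isometry u v (hu.trans hv.symm)
  calc σ {z | ‖z‖ = 1 ∧ |⟪v, z⟫ - c| ≤ ε}
      = (Measure.map (⇑O) σ) {z | ‖z‖ = 1 ∧ |⟪v, z⟫ - c| ≤ ε} := by rw [hinv O]
    _ = σ (⇑O ⁻¹' {z | ‖z‖ = 1 ∧ |⟪v, z⟫ - c| ≤ ε}) :=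
        Measure.map_apply O.continuous.measurable (slice_measurable v c ε)
    _ = σ {z | ‖z‖ = 1 ∧ |⟪z, u⟫ - c| ≤ ε} := by
        congr 1
        ext z
        simp only [Set.mem_preimage, Set.mem_setOf_eq, O.norm_map, ← hO,
          LinearIsometryEquiv.inner_map_map]
        rw [real_inner_comm]

variable {σ : Measure (EuclideanSpace ℝ (Fin d))}

lemma sphere_compl_null (h1 : σ (Metric.sphere (0 : E) 1) = 1) [IsProbabilityMeasure σ] :
    σ (Metric.sphere (0 : E) 1)ᶜ = 0 := by
  rw [measure_compl (Metric.isClosed_sphere.measurableSet) (measure_ne_top σ _), h1,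
    measure_univ, tsub_self]

lemma ae_on_sphere (h1 : σ (Metric.sphere (0 : E) 1) = 1) [IsProbabilityMeasure σ] :
    ∀ᵐ z ∂σ, ‖z‖ = 1 := by
  rw [ae_iff]
  have : {z : E | ¬ ‖z‖ = 1} = (Metric.sphere (0 : E) 1)ᶜ := by
    ext z; simp [mem_sphere_zero_iff_norm]
  rw [this]
  exact sphere_compl_null h1

lemma diag_null (hd : 2 ≤ d) [IsProbabilityMeasure σ]
    (h1 : σ (Metric.sphere (0 : E) 1) = 1)
    (hinv : ∀ O : E ≃ₗᵢ[ℝ] E, Measure.map (⇑O) σ = σ) :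
    (σ.prod σ) {q : E × E | q.1 = q.2} = 0 := by
  have hdiag : MeasurableSet {q : E × E | q.1 = q.2} :=
    (isClosed_diagonal (X := E)).measurableSet
  rw [Measure.prod_apply hdiag]
  have : ∀ᵐ a ∂σ, σ (Prod.mk a ⁻¹' {q : E × E | q.1 = q.2}) = 0 := by
    filter_upwards [ae_on_sphere h1] with a ha
    have : Prod.mk a ⁻¹' {q : E × E | q.1 = q.2} = {a} := by
      ext b; simp [eq_comm]
    rw [this]
    exact sphere_atomless hd σ hinv a ha
  exact lintegral_eq_zero_iff (measurable_measure_prodMk_left hdiag) |>.2 this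

lemma Smeasurable (θ θ' ε : ℝ) :
    MeasurableSet {q : (E × E) × E | q.1.1 ≠ q.1.2 ∧ |⟪q.1.1, q.1.2⟫ - Real.cos θ| ≤ ε ∧
      |⟪‖q.1.1 - q.1.2‖⁻¹ • (q.1.1 - q.1.2), q.2⟫ - Real.cos θ'| ≤ ε} := by
  apply MeasurableSet.inter
  · have heq : MeasurableSet {q : (E × E) × E | q.1.1 = q.1.2} :=
      ((isClosed_diagonal (X := E)).measurableSet).preimage
        (measurable_fst.fst.prodMk measurable_fst.snd)
    exact heq.compl
  apply MeasurableSet.inter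
  · have hcont : Continuous fun q : (E × E) × E => |⟪q.1.1, q.1.2⟫ - Real.cos θ| :=
      ((Continuous.inner continuous_fst.fst continuous_fst.snd).sub continuous_const).abs
    exact (isClosed_le hcont continuous_const).measurableSet
  · have hmeas : Measurable fun q : (E × E) × E =>
        |⟪‖q.1.1 - q.1.2‖⁻¹ • (q.1.1 - q.1.2), q.2⟫ - Real.cos θ'| := by
      apply Measurable.abs
      apply Measurable.sub _ measurable_const
      apply Measurable.inner _ measurable_snd
      exact ((measurable_fst.fst.sub measurable_fst.snd).norm.inv).smul
        (measurable_fst.fst.sub measurable_fst.snd)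
    exact measurableSet_le hmeas measurable_const

lemma key_prob (hd : 2 ≤ d) [IsProbabilityMeasure σ]
    (h1 : σ (Metric.sphere (0 : E) 1) = 1)
    (hinv : ∀ O : E ≃ₗᵢ[ℝ] E, Measure.map (⇑O) σ = σ)
    (u : E) (hu : ‖u‖ = 1) (θ θ' ε : ℝ) :
    ((σ.prod σ).prod σ) {q : (E × E) × E | q.1.1 ≠ q.1.2 ∧
        |⟪q.1.1, q.1.2⟫ - Real.cos θ| ≤ ε ∧
        |⟪‖q.1.1 - q.1.2‖⁻¹ • (q.1.1 - q.1.2), q.2⟫ - Real.cos θ'| ≤ ε}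
      = (σ.prod σ) {q : E × E | ‖q.1‖ = 1 ∧ ‖q.2‖ = 1 ∧ |⟪q.1, q.2⟫ - Real.cos θ| ≤ ε}
        * σ {z : E | ‖z‖ = 1 ∧ |⟪z, u⟫ - Real.cos θ'| ≤ ε} := by
  set A : Set (E × E) := {q : E × E | ‖q.1‖ = 1 ∧ ‖q.2‖ = 1 ∧ |⟪q.1, q.2⟫ - Real.cos θ| ≤ ε}
    with hA
  set B : Set E := {z : E | ‖z‖ = 1 ∧ |⟪z, u⟫ - Real.cos θ'| ≤ ε} with hB
  have hAm : MeasurableSet A := by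
    apply MeasurableSet.inter
    · exact (isClosed_eq continuous_fst.norm continuous_const).measurableSet
    apply MeasurableSet.inter
    · exact (isClosed_eq continuous_snd.norm continuous_const).measurableSet
    · have hcont : Continuous fun q : E × E => |⟪q.1, q.2⟫ - Real.cos θ| :=
        ((Continuous.inner (continuous_fst : Continuous (Prod.fst : E × E → E))
          (continuous_snd : Continuous (Prod.snd : E × E → E))).sub continuous_const).abs
      exact (isClosed_le hcont continuous_const).measurableSet
  rw [Measure.prod_apply (Smeasurable θ θ' ε)]
  have hae : ∀ᵐ ab ∂(σ.prod σ), ‖ab.1‖ = 1 ∧ ‖ab.2‖ = 1 ∧ ab.1 ≠ ab.2 := by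
    rw [ae_iff]
    have hnull : (σ.prod σ) (((Metric.sphere (0:E) 1)ᶜ ×ˢ Set.univ) ∪
        (Set.univ ×ˢ (Metric.sphere (0:E) 1)ᶜ) ∪ {q : E × E | q.1 = q.2}) = 0 := by
      apply measure_union_null
      · apply measure_union_null
        · rw [Measure.prod_prod, sphere_compl_null h1, zero_mul]
        · rw [Measure.prod_prod, sphere_compl_null h1, mul_zero]
      · exact diag_null hd h1 hinv
    refine measure_mono_null ?_ hnull
    intro q hq
    simp only [Set.mem_setOf_eq, not_and, not_ne_iff] at hq
    by_cases h1' : ‖q.1‖ = 1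
    · by_cases h2' : ‖q.2‖ = 1
      · exact Or.inr (hq h1' h2')
      · exact Or.inl (Or.inr ⟨Set.mem_univ _, by simpa [mem_sphere_zero_iff_norm] using h2'⟩)
    · exact Or.inl (Or.inl ⟨by simpa [mem_sphere_zero_iff_norm] using h1', Set.mem_univ _⟩)
  have hpt : ∀ᵐ ab ∂(σ.prod σ),
      σ (Prod.mk ab ⁻¹' {q : (E × E) × E | q.1.1 ≠ q.1.2 ∧
        |⟪q.1.1, q.1.2⟫ - Real.cos θ| ≤ ε ∧
        |⟪‖q.1.1 - q.1.2‖⁻¹ • (q.1.1 - q.1.2), q.2⟫ - Real.cos θ'| ≤ ε})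
      = A.indicator (fun _ => σ B) ab := by
    filter_upwards [hae] with ab hab
    obtain ⟨ha, hb, hne⟩ := hab
    by_cases hcond : |⟪ab.1, ab.2⟫ - Real.cos θ| ≤ ε
    · have hmemA : ab ∈ A := ⟨ha, hb, hcond⟩
      rw [Set.indicator_of_mem hmemA]
      have hset : Prod.mk ab ⁻¹' {q : (E × E) × E | q.1.1 ≠ q.1.2 ∧
          |⟪q.1.1, q.1.2⟫ - Real.cos θ| ≤ ε ∧
          |⟪‖q.1.1 - q.1.2‖⁻¹ • (q.1.1 - q.1.2), q.2⟫ - Real.cos θ'| ≤ ε} =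
          {z : E | |⟪‖ab.1 - ab.2‖⁻¹ • (ab.1 - ab.2), z⟫ - Real.cos θ'| ≤ ε} := by
        ext z
        simp only [Set.mem_preimage, Set.mem_setOf_eq]
        exact ⟨fun h => h.2.2, fun h => ⟨hne, hcond, h⟩⟩
      rw [hset]
      set v : E := ‖ab.1 - ab.2‖⁻¹ • (ab.1 - ab.2) with hv
      have hvnorm : ‖v‖ = 1 := by
        rw [hv, norm_smul, norm_inv, norm_norm]
        exact inv_mul_cancel₀ (norm_ne_zero_iff.2 (sub_ne_zero.2 hne))
      have hinter : σ {z : E | |⟪v, z⟫ - Real.cos θ'| ≤ ε} =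
          σ {z : E | ‖z‖ = 1 ∧ |⟪v, z⟫ - Real.cos θ'| ≤ ε} := by
        have : {z : E | ‖z‖ = 1 ∧ |⟪v, z⟫ - Real.cos θ'| ≤ ε} =
            {z : E | |⟪v, z⟫ - Real.cos θ'| ≤ ε} ∩ Metric.sphere (0:E) 1 := by
          ext z; simp [mem_sphere_zero_iff_norm, and_comm]
        rw [this, measure_inter_conull (sphere_compl_null h1)]
      rw [hinter, slice_invariant σ hinv u v hu hvnorm]
    · have hnotA : ab ∉ A := fun h => hcond h.2.2
      have hres : Prod.mk ab ⁻¹' {q : (E × E) × E | q.1.1 ≠ q.1.2 ∧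
          |⟪q.1.1, q.1.2⟫ - Real.cos θ| ≤ ε ∧
          |⟪‖q.1.1 - q.1.2‖⁻¹ • (q.1.1 - q.1.2), q.2⟫ - Real.cos θ'| ≤ ε} = (∅ : Set E) := by
        ext z
        simp only [Set.mem_preimage, Set.mem_setOf_eq, Set.mem_empty_iff_false, iff_false]
        exact fun h => hcond h.2.1
      rw [hres, measure_empty, Set.indicator_of_notMem hnotA]
  rw [lintegral_congr_ae hpt, lintegral_indicator hAm, setLIntegral_const, mul_comm]

lemma law_triple {m : ℕ} {Ω : Type*} [MeasurableSpace Ω] (μ : Measure Ω) [IsProbabilityMeasure μ]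
    (x : Fin m → Ω → E) (hxmeas : ∀ i, Measurable (x i))
    (hxdist : ∀ i, Measure.map (x i) μ = σ)
    (hxindep : iIndepFun x μ)
    (i j k : Fin m) (hij : i ≠ j) (hik : i ≠ k) (hjk : j ≠ k) :
    Measure.map (fun ω => ((x i ω, x j ω), x k ω)) μ = (σ.prod σ).prod σ := by
  have hindep2 : IndepFun (x i) (x j) μ := hxindep.indepFun hij
  have hmapij : Measure.map (fun ω => (x i ω, x j ω)) μ = σ.prod σ := by
    rw [(indepFun_iff_map_prod_eq_prod_map_map (hxmeas i).aemeasurable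
      (hxmeas j).aemeasurable).1 hindep2, hxdist i, hxdist j]
  have hindep3 : IndepFun (fun ω => (x i ω, x j ω)) (x k) μ :=
    hxindep.indepFun_prodMk hxmeas i j k hik hjk
  rw [(indepFun_iff_map_prod_eq_prod_map_map ((hxmeas i).prodMk (hxmeas j)).aemeasurable
    (hxmeas k).aemeasurable).1 hindep3, hmapij, hxdist k]


lemma card_triples (m : ℕ) :
    (Finset.univ.filter (fun t : Fin m × Fin m × Fin m =>
      t.1 ≠ t.2.1 ∧ t.1 ≠ t.2.2 ∧ t.2.1 ≠ t.2.2)).card = m * (m - 1) * (m - 2) := by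
  have hcard : (Finset.univ.filter (fun t : Fin m × Fin m × Fin m =>
      t.1 ≠ t.2.1 ∧ t.1 ≠ t.2.2 ∧ t.2.1 ≠ t.2.2)).card
      = (Finset.univ : Finset (Fin 3 ↪ Fin m)).card := by
    apply Finset.card_bij' (i := fun t ht => (⟨![t.1, t.2.1, t.2.2], by
        simp only [Finset.mem_filter] at ht
        obtain ⟨-, h1, h2, h3⟩ := ht
        intro a b hab
        fin_cases a <;> fin_cases b <;> simp_all⟩ : Fin 3 ↪ Fin m))
      (j := fun f _ => (f 0, f 1, f 2))
    case hi => intro t ht; exact Finset.mem_univ _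
    case hj =>
      intro f _
      simp only [Finset.mem_filter, Finset.mem_univ, true_and]
      exact ⟨f.injective.ne (by decide), f.injective.ne (by decide),
        f.injective.ne (by decide)⟩
    case left_inv => intro t ht; simp
    case right_inv =>
      intro f hf
      apply Function.Embedding.ext
      intro a
      fin_cases a <;> simp
  rw [hcard, Finset.card_univ, Fintype.card_embedding_eq, Fintype.card_fin, Fintype.card_fin]
  show m.descFactorial 3 = _
  simp only [Nat.descFactorial_succ, Nat.descFactorial_zero, mul_one, Nat.sub_zero]
  ring

end Aux

/-- The expected number of ordered solution triples of the 3-list problem: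
`E[Z] = m(m−1)(m−2)·p·p′`, where `Z` counts triples `(i,j,k)` of pairwise distinct indices
with `x_i ≠ x_j`, `|⟨x_i,x_j⟩ − cos θ| ≤ ε`, and `|⟨(x_i−x_j)/‖x_i−x_j‖, x_k⟩ − cos θ′| ≤ ε`. -/
theorem expected_number_of_triples {d m : ℕ} (hd : 2 ≤ d) (hm : 3 ≤ m)
    (θ θ' ε : ℝ) (hε : 0 ≤ ε)
    (σ : Measure (EuclideanSpace ℝ (Fin d))) (hσ : IsUniformSphereMeasure d σ)
    (u : EuclideanSpace ℝ (Fin d)) (hu : ‖u‖ = 1)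
    (p p' : ℝ)
    (hp : p = ((σ.prod σ) {q : EuclideanSpace ℝ (Fin d) × EuclideanSpace ℝ (Fin d) |
      ‖q.1‖ = 1 ∧ ‖q.2‖ = 1 ∧ |⟪q.1, q.2⟫ - Real.cos θ| ≤ ε}).toReal)
    (hp' : p' = (σ {z | ‖z‖ = 1 ∧ |⟪z, u⟫ - Real.cos θ'| ≤ ε}).toReal)
    {Ω : Type*} [MeasurableSpace Ω] (μ : Measure Ω) [IsProbabilityMeasure μ]
    (x : Fin m → Ω → EuclideanSpace ℝ (Fin d))
    (hxmeas : ∀ i, Measurable (x i))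
    (hxdist : ∀ i, Measure.map (x i) μ = σ)
    (hxindep : iIndepFun x μ) :
    ∫ ω, ((Finset.univ.filter (fun t : Fin m × Fin m × Fin m =>
        t.1 ≠ t.2.1 ∧ t.1 ≠ t.2.2 ∧ t.2.1 ≠ t.2.2 ∧
        x t.1 ω ≠ x t.2.1 ω ∧
        |⟪x t.1 ω, x t.2.1 ω⟫ - Real.cos θ| ≤ ε ∧
        |⟪‖x t.1 ω - x t.2.1 ω‖⁻¹ • (x t.1 ω - x t.2.1 ω), x t.2.2 ω⟫ - Real.cos θ'| ≤ ε)).card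
          : ℝ) ∂μ
      = m * ((m : ℝ) - 1) * ((m : ℝ) - 2) * p * p' := by
  obtain ⟨hprob, h1, hinv⟩ := hσ
  haveI : IsProbabilityMeasure σ := hprob
  set cond : Fin m × Fin m × Fin m → Ω → Prop := fun t ω =>
    t.1 ≠ t.2.1 ∧ t.1 ≠ t.2.2 ∧ t.2.1 ≠ t.2.2 ∧
    x t.1 ω ≠ x t.2.1 ω ∧
    |⟪x t.1 ω, x t.2.1 ω⟫ - Real.cos θ| ≤ ε ∧
    |⟪‖x t.1 ω - x t.2.1 ω‖⁻¹ • (x t.1 ω - x t.2.1 ω), x t.2.2 ω⟫ - Real.cos θ'| ≤ ε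
    with hcond
  set S : Set ((EuclideanSpace ℝ (Fin d) × EuclideanSpace ℝ (Fin d)) × EuclideanSpace ℝ (Fin d)) :=
    {q : (EuclideanSpace ℝ (Fin d) × EuclideanSpace ℝ (Fin d)) × EuclideanSpace ℝ (Fin d) | q.1.1 ≠ q.1.2 ∧
      |⟪q.1.1, q.1.2⟫ - Real.cos θ| ≤ ε ∧
      |⟪‖q.1.1 - q.1.2‖⁻¹ • (q.1.1 - q.1.2), q.2⟫ - Real.cos θ'| ≤ ε} with hS
  have hSm : MeasurableSet S := Smeasurable θ θ' ε
  -- per-triple analysis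
  have hint : ∀ t : Fin m × Fin m × Fin m,
      Integrable (fun ω => if cond t ω then (1:ℝ) else 0) μ ∧
      ∫ ω, (if cond t ω then (1:ℝ) else 0) ∂μ
        = if t.1 ≠ t.2.1 ∧ t.1 ≠ t.2.2 ∧ t.2.1 ≠ t.2.2 then p * p' else 0 := by
    intro t
    by_cases hdist : t.1 ≠ t.2.1 ∧ t.1 ≠ t.2.2 ∧ t.2.1 ≠ t.2.2
    · obtain ⟨h12, h13, h23⟩ := hdist
      have hY : Measurable fun ω => ((x t.1 ω, x t.2.1 ω), x t.2.2 ω) :=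
        ((hxmeas t.1).prodMk (hxmeas t.2.1)).prodMk (hxmeas t.2.2)
      have hEt : {ω | cond t ω} = (fun ω => ((x t.1 ω, x t.2.1 ω), x t.2.2 ω)) ⁻¹' S := by
        ext ω
        simp only [hcond, hS, Set.mem_setOf_eq, Set.mem_preimage]
        tauto
      have hEtm : MeasurableSet {ω | cond t ω} := by
        rw [hEt]; exact hSm.preimage hY
      have hindicator : (fun ω => if cond t ω then (1:ℝ) else 0)
          = Set.indicator {ω | cond t ω} (fun _ => (1:ℝ)) := by
        funext ω
        rw [Set.indicator_apply]
        rfl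
      have hμEt : μ {ω | cond t ω}
          = (σ.prod σ) {q : EuclideanSpace ℝ (Fin d) × EuclideanSpace ℝ (Fin d) |
              ‖q.1‖ = 1 ∧ ‖q.2‖ = 1 ∧ |⟪q.1, q.2⟫ - Real.cos θ| ≤ ε}
            * σ {z : EuclideanSpace ℝ (Fin d) | ‖z‖ = 1 ∧ |⟪z, u⟫ - Real.cos θ'| ≤ ε} := by
        rw [hEt, ← Measure.map_apply hY hSm,
          law_triple μ x hxmeas hxdist hxindep t.1 t.2.1 t.2.2 h12 h13 h23, hS]
        exact key_prob hd h1 hinv u hu θ θ' ε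
      constructor
      · rw [hindicator]
        exact (integrable_const (1:ℝ)).indicator hEtm
      · rw [if_pos ⟨h12, h13, h23⟩, hindicator]
        have := integral_indicator_one (μ := μ) hEtm
        rw [show Set.indicator {ω | cond t ω} (fun _ => (1:ℝ)) = Set.indicator {ω | cond t ω} (1 : Ω → ℝ) from rfl]
        rw [this, measureReal_def, hμEt, ENNReal.toReal_mul, hp, hp']
    · have hzero : (fun ω => if cond t ω then (1:ℝ) else 0) = fun _ => 0 := by
        funext ω
        rw [if_neg]
        intro h
        exact hdist ⟨h.1, h.2.1, h.2.2.1⟩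
      rw [hzero, if_neg hdist]
      exact ⟨integrable_const 0, by simp⟩
  -- rewrite the integrand as a finite sum
  have hcardsum : ∀ ω : Ω, ((Finset.univ.filter (fun t : Fin m × Fin m × Fin m =>
      t.1 ≠ t.2.1 ∧ t.1 ≠ t.2.2 ∧ t.2.1 ≠ t.2.2 ∧
      x t.1 ω ≠ x t.2.1 ω ∧
      |⟪x t.1 ω, x t.2.1 ω⟫ - Real.cos θ| ≤ ε ∧
      |⟪‖x t.1 ω - x t.2.1 ω‖⁻¹ • (x t.1 ω - x t.2.1 ω), x t.2.2 ω⟫ - Real.cos θ'| ≤ ε)).card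
        : ℝ) = ∑ t : Fin m × Fin m × Fin m, (if cond t ω then (1:ℝ) else 0) := by
    intro ω
    rw [Finset.card_filter]
    push_cast
    rfl
  calc ∫ ω, ((Finset.univ.filter (fun t : Fin m × Fin m × Fin m =>
        t.1 ≠ t.2.1 ∧ t.1 ≠ t.2.2 ∧ t.2.1 ≠ t.2.2 ∧
        x t.1 ω ≠ x t.2.1 ω ∧
        |⟪x t.1 ω, x t.2.1 ω⟫ - Real.cos θ| ≤ ε ∧
        |⟪‖x t.1 ω - x t.2.1 ω‖⁻¹ • (x t.1 ω - x t.2.1 ω), x t.2.2 ω⟫ - Real.cos θ'| ≤ ε)).card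
          : ℝ) ∂μ
      = ∫ ω, ∑ t : Fin m × Fin m × Fin m, (if cond t ω then (1:ℝ) else 0) ∂μ := by
        exact integral_congr_ae (Filter.Eventually.of_forall hcardsum)
    _ = ∑ t : Fin m × Fin m × Fin m, ∫ ω, (if cond t ω then (1:ℝ) else 0) ∂μ :=
        integral_finset_sum _ (fun t _ => (hint t).1)
    _ = ∑ t : Fin m × Fin m × Fin m,
          (if t.1 ≠ t.2.1 ∧ t.1 ≠ t.2.2 ∧ t.2.1 ≠ t.2.2 then p * p' else 0) :=
        Finset.sum_congr rfl (fun t _ => (hint t).2)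
    _ = ((Finset.univ.filter (fun t : Fin m × Fin m × Fin m =>
          t.1 ≠ t.2.1 ∧ t.1 ≠ t.2.2 ∧ t.2.1 ≠ t.2.2)).card : ℝ) * (p * p') := by
        rw [Finset.sum_ite, Finset.sum_const, Finset.sum_const_zero, add_zero, nsmul_eq_mul]
    _ = m * ((m : ℝ) - 1) * ((m : ℝ) - 2) * p * p' := by
        rw [card_triples m]
        have h2 : (2:ℕ) ≤ m := by omega
        have h1' : (1:ℕ) ≤ m := by omega
        push_cast [Nat.cast_sub h1', Nat.cast_sub h2]
        ring
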